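/- For an odd prime N and u coprime to N, the discrete Fourier transform of the Zadoff–Chu sequence x_u[n] = exp(-iπ u n(n+1)/N) satisfies X_u[k] = X_u[0] · conj(x_u[u⁻¹ k]) for every k, where u⁻¹ is the multiplicative inverse of u modulo N and X_u[k] = Σ_{n=0}^{N-1} x_u[n]·exp(-2πi kn/N). -/

import Mathlib

open Complex

/-- The DFT of a Zadoff–Chu sequence of odd prime length is a scaled, time-scaled
Zadoff–Chu sequence: `X_u[k] = X_u[0] * conj (x_u[u⁻¹ k])`. -/
theorem zc_dft (N : ℕ) (hN : N.Prime) (hodd : Odd N) (u uinv : ℤ)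
    (hu1 : 1 ≤ u) (hu2 : u ≤ (N : ℤ) - 1) (hinv : u * uinv ≡ 1 [ZMOD (N : ℤ)])
    (x : ℤ → ℂ)
    (hx : ∀ n : ℤ, x n =
      Complex.exp (-((Real.pi : ℂ) * u * (n : ℂ) * ((n : ℂ) + 1) / N) * Complex.I))
    (X : ℤ → ℂ)
    (hX : ∀ k : ℤ, X k = ∑ n ∈ Finset.range N,
      x n * Complex.exp (-(2 * (Real.pi : ℂ) * Complex.I * k * n / N)))
    (k : ℤ) :
    X k = X 0 * (starRingEnd ℂ) (x (uinv * k)) := by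
  have hNpos : 0 < N := hN.pos
  have hN0 : (N : ℂ) ≠ 0 := Nat.cast_ne_zero.mpr hNpos.ne'
  have hNz : (N : ℤ) ≠ 0 := by exact_mod_cast hNpos.ne'
  have hNp : (0:ℤ) < N := by exact_mod_cast hNpos
  obtain ⟨c, hc⟩ := hodd
  -- congruence invariance of x
  have hcong : ∀ a b : ℤ, (N : ℤ) ∣ (a - b) → x a = x b := by
    intro a b ⟨s, hs⟩
    have ha : a = b + N * s := by linarith
    have hev : ∃ w : ℤ, u * s * (a + b + 1) = 2 * w := by
      rcases Int.even_or_odd s with ⟨j, hj⟩ | ⟨j, hj⟩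
      · exact ⟨u * j * (a + b + 1), by rw [hj]; ring⟩
      · refine ⟨u * s * (b + c * s + j + 1), ?_⟩
        subst ha; rw [hj]
        have hc' : (N : ℤ) = 2 * c + 1 := by exact_mod_cast hc
        rw [hc']; ring
    obtain ⟨w, hw⟩ := hev
    have hha : (a : ℂ) = b + N * s := by exact_mod_cast ha
    have hhw : (u : ℂ) * s * ((a:ℂ) + b + 1) = 2 * w := by exact_mod_cast hw
    rw [hx a, hx b]
    have hexp : -((Real.pi : ℂ) * u * a * ((a:ℂ) + 1) / N) * Complex.I
        = -((Real.pi : ℂ) * u * b * ((b:ℂ) + 1) / N) * Complex.I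
          + ((-w : ℤ) : ℂ) * (2 * Real.pi * Complex.I) := by
      push_cast
      have hinvN : (N:ℂ) * (N:ℂ)⁻¹ = 1 := mul_inv_cancel₀ hN0
      linear_combination (-(Real.pi:ℂ)*u*Complex.I*(N:ℂ)⁻¹*((a:ℂ)+b+1))*hha
        - ((Real.pi:ℂ)*Complex.I)*hhw - ((Real.pi:ℂ)*u*Complex.I*s*((a:ℂ)+b+1))*hinvN
    rw [hexp, Complex.exp_add, Complex.exp_int_mul_two_pi_mul_I, mul_one]
  -- shift invariance of the sum
  have hper : ∀ m : ℤ, ∑ n ∈ Finset.range N, x (n + m) = ∑ n ∈ Finset.range N, x n := by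
    intro m
    refine Finset.sum_nbij' (fun n => (((n : ℤ) + m) % N).toNat)
      (fun n => (((n : ℤ) - m) % N).toNat) ?_ ?_ ?_ ?_ ?_
    · intro a _
      simp only [Finset.mem_range]
      have h1 : 0 ≤ ((a : ℤ) + m) % N := Int.emod_nonneg _ hNz
      have h2 : ((a : ℤ) + m) % N < N := Int.emod_lt_of_pos _ hNp
      omega
    · intro a _
      simp only [Finset.mem_range]
      have h1 : 0 ≤ ((a : ℤ) - m) % N := Int.emod_nonneg _ hNz
      have h2 : ((a : ℤ) - m) % N < N := Int.emod_lt_of_pos _ hNp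
      omega
    · intro a ha
      simp only [Finset.mem_range] at ha
      have h1 : 0 ≤ ((a : ℤ) + m) % N := Int.emod_nonneg _ hNz
      have h3 : (((((a : ℤ) + m) % N).toNat : ℤ)) = ((a : ℤ) + m) % N := Int.toNat_of_nonneg h1
      rw [h3]
      have h4 : ((((a : ℤ) + m) % N) - m) % N = (a : ℤ) % N := by
        conv_rhs => rw [show (a : ℤ) = ((a:ℤ) + m) - m by ring]
        rw [Int.sub_emod, Int.emod_emod_of_dvd _ dvd_rfl, ← Int.sub_emod]
      have h5 : (a : ℤ) % N = a := Int.emod_eq_of_lt (by positivity) (by exact_mod_cast ha)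
      rw [h4, h5]
      exact Int.toNat_natCast a
    · intro a ha
      simp only [Finset.mem_range] at ha
      have h1 : 0 ≤ ((a : ℤ) - m) % N := Int.emod_nonneg _ hNz
      have h3 : (((((a : ℤ) - m) % N).toNat : ℤ)) = ((a : ℤ) - m) % N := Int.toNat_of_nonneg h1
      rw [h3]
      have h4 : ((((a : ℤ) - m) % N) + m) % N = (a : ℤ) % N := by
        conv_rhs => rw [show (a : ℤ) = ((a:ℤ) - m) + m by ring]
        rw [Int.add_emod, Int.emod_emod_of_dvd _ dvd_rfl, ← Int.add_emod]
      have h5 : (a : ℤ) % N = a := Int.emod_eq_of_lt (by positivity) (by exact_mod_cast ha)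
      rw [h4, h5]
      exact Int.toNat_natCast a
    · intro a _
      apply hcong
      have h1 : 0 ≤ ((a : ℤ) + m) % N := Int.emod_nonneg _ hNz
      have h3 : (((((a : ℤ) + m) % N).toNat : ℤ)) = ((a : ℤ) + m) % N := Int.toNat_of_nonneg h1
      rw [h3, Int.emod_def]
      exact ⟨(((a:ℤ)+m)/N), by ring⟩
  -- the inverse relation
  set m : ℤ := uinv * k with hm
  obtain ⟨t, ht⟩ : ∃ t : ℤ, k = u * m + N * t := by
    obtain ⟨d, hd⟩ := (Int.ModEq.dvd hinv)
    exact ⟨k * d, by rw [hm]; linear_combination k * hd⟩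
  -- conjugate of x m
  have hconj : (starRingEnd ℂ) (x m)
      = Complex.exp (((Real.pi : ℂ) * u * (m:ℂ) * ((m : ℂ) + 1) / N) * Complex.I) := by
    rw [hx m, ← Complex.exp_conj]
    congr 1
    simp [map_div₀, Complex.conj_I]
  -- key term identity
  have key : ∀ n ∈ Finset.range N,
      x n * Complex.exp (-(2 * (Real.pi : ℂ) * Complex.I * k * n / N))
        = x ((n : ℤ) + m) * (starRingEnd ℂ) (x m) := by
    intro n _
    rw [hconj, hx (n : ℤ), hx ((n : ℤ) + m), ← Complex.exp_add, ← Complex.exp_add]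
    have hht : (k : ℂ) = u * m + N * t := by exact_mod_cast ht
    rw [show (-((Real.pi : ℂ) * u * (((n:ℤ)) : ℂ) * ((((n:ℤ)) : ℂ) + 1) / N) * Complex.I
          + -(2 * (Real.pi : ℂ) * Complex.I * k * n / N))
        = (-((Real.pi : ℂ) * u * (((n : ℤ) + m : ℤ) : ℂ) * ((((n : ℤ) + m : ℤ) : ℂ) + 1) / N) * Complex.I
          + ((Real.pi : ℂ) * u * (m:ℂ) * ((m : ℂ) + 1) / N) * Complex.I)
          + ((-((n:ℤ) * t) : ℤ) : ℂ) * (2 * Real.pi * Complex.I) from ?_]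
    · rw [Complex.exp_add, Complex.exp_int_mul_two_pi_mul_I, mul_one]
    · push_cast
      apply mul_left_cancel₀ hN0
      field_simp
      linear_combination (-2*(n:ℂ))*hht
  rw [hX k, Finset.sum_congr rfl key, ← Finset.sum_mul, hper m, hX 0]
  congr 1
  apply Finset.sum_congr rfl
  intro n _
  norm_num
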